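/- Let S be a linear subspace of ℝ^n, D a positive diagonal matrix, and ξ*, ξ_0 ∈ ℝ^n. Then the affine subspaces ξ* + S^⊥ and ξ_0 + DS intersect in exactly one point. -/

import Mathlib

noncomputable def mulDmap {n : ℕ} (d : Fin n → ℝ) :
    EuclideanSpace ℝ (Fin n) →ₗ[ℝ] EuclideanSpace ℝ (Fin n) where
  toFun x := WithLp.toLp 2 (fun k => d k * x k)
  map_add' x y := PiLp.ext fun k => by
    show d k * (x k + y k) = d k * x k + d k * y k
    ring
  map_smul' c x := PiLp.ext fun k => by
    show d k * (c * x k) = c * (d k * x k)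
    ring

theorem unique_intersection_perp_scaled_translate {n : ℕ}
    (S : Submodule ℝ (EuclideanSpace ℝ (Fin n)))
    (d : Fin n → ℝ) (hd : ∀ k, 0 < d k)
    (ξs ξ0 : EuclideanSpace ℝ (Fin n)) :
    ∃! ζ : EuclideanSpace ℝ (Fin n),
      ζ - ξs ∈ Sᗮ ∧ ∃ s ∈ S, ∀ k, ζ k - ξ0 k = d k * s k := by
  set L := mulDmap d with hL
  set T := S.map L with hT
  -- disjointness
  have hdisj : Disjoint T Sᗮ := by
    rw [disjoint_iff]
    ext x
    simp only [Submodule.mem_inf, Submodule.mem_bot]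
    constructor
    · rintro ⟨hxT, hxP⟩
      obtain ⟨s, hs, rfl⟩ := hxT
      have h0 : (inner ℝ s (L s) : ℝ) = 0 := hxP s hs
      have hsum : ∑ k, d k * (s k)^2 = 0 := by
        rw [← h0, PiLp.inner_apply]
        refine Finset.sum_congr rfl fun k _ => ?_
        have hLk : (L s) k = d k * s k := rfl
        rw [RCLike.inner_apply, hLk]
        simp
        ring
      have hz : ∀ k ∈ Finset.univ, d k * (s k)^2 = 0 := by
        intro k _
        have := Finset.sum_eq_zero_iff_of_nonneg (fun k _ =>
          mul_nonneg (hd k).le (sq_nonneg (s k))) |>.mp hsum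
        exact this k (Finset.mem_univ k)
      have hs0 : s = 0 := by
        refine PiLp.ext fun k => ?_
        have := hz k (Finset.mem_univ k)
        have : (s k)^2 = 0 := by
          rcases mul_eq_zero.mp this with h | h
          · exact absurd h (hd k).ne'
          · exact h
        exact pow_eq_zero_iff (by norm_num) |>.mp this
      rw [hs0, map_zero]
    · rintro rfl
      exact ⟨Submodule.zero_mem _, Submodule.zero_mem _⟩
  -- injectivity of L
  have hLinj : Function.Injective L := by
    intro x y hxy
    refine PiLp.ext fun k => ?_
    have : d k * x k = d k * y k := congrArg (fun v => v k) hxy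
    exact mul_left_cancel₀ (hd k).ne' this
  -- finrank T = finrank S
  have hrank : Module.finrank ℝ T = Module.finrank ℝ S := by
    rw [hT]
    exact (LinearEquiv.finrank_eq
      (Submodule.equivMapOfInjective L hLinj S)).symm
  -- sup is top
  have hsup : T ⊔ Sᗮ = ⊤ := by
    apply Submodule.eq_top_of_finrank_eq
    have h1 := Submodule.finrank_sup_add_finrank_inf_eq T Sᗮ
    have h2 : Module.finrank ℝ ↥(T ⊓ Sᗮ) = 0 := by
      rw [disjoint_iff.mp hdisj]; simp
    have h3 := Submodule.finrank_add_finrank_orthogonal (K := S)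
    have h4 : Module.finrank ℝ (EuclideanSpace ℝ (Fin n)) = n := by
      simp
    omega
  -- existence
  have hmem : ξs - ξ0 ∈ T ⊔ Sᗮ := hsup ▸ Submodule.mem_top
  obtain ⟨t, ht, p, hp, htp⟩ := Submodule.mem_sup.mp hmem
  obtain ⟨s, hs, rfl⟩ := ht
  have hK : ξ0 + L s - ξs = -p := by
    calc ξ0 + L s - ξs = (L s + p) - (ξs - ξ0) - p := by abel
    _ = -p := by rw [htp]; abel
  refine ⟨ξ0 + L s, ⟨?_, s, hs, ?_⟩, ?_⟩
  · rw [hK]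
    exact Submodule.neg_mem _ hp
  · intro k
    show ξ0 k + (L s) k - ξ0 k = d k * s k
    show ξ0 k + d k * s k - ξ0 k = d k * s k
    ring
  · rintro ζ ⟨hζP, s', hs', hζs'⟩
    have hdiff1 : ζ - (ξ0 + L s) ∈ Sᗮ := by
      have : ζ - (ξ0 + L s) = (ζ - ξs) - (ξ0 + L s - ξs) := by abel
      rw [this]
      refine Submodule.sub_mem _ hζP ?_
      rw [hK]
      exact Submodule.neg_mem _ hp
    have hdiff2 : ζ - (ξ0 + L s) ∈ T := by
      have : ζ - (ξ0 + L s) = L (s' - s) := by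
        refine PiLp.ext fun k => ?_
        show ζ k - (ξ0 k + d k * s k) = d k * (s' k - s k)
        rw [mul_sub]
        have := hζs' k
        linarith
      rw [this]
      exact Submodule.mem_map_of_mem (Submodule.sub_mem _ hs' hs)
    have : ζ - (ξ0 + L s) = 0 := by
      have := disjoint_iff.mp hdisj ▸ Submodule.mem_inf.mpr ⟨hdiff2, hdiff1⟩
      simpa using this
    have := sub_eq_zero.mp this
    exact this
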